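/- Every f ∈ BV(0,1) can be represented as f(x) = ∫₀¹ H̄_y(x) dDf(y) + η for almost every x ∈ (0,1), where η is a constant. -/

import Mathlib

open MeasureTheory

/-- The zero-mean shifted Heaviside function: `y - 1` for `x < y`, `y` for `x ≥ y`. -/
noncomputable def Hbar (y x : ℝ) : ℝ := if x < y then y - 1 else y

/-- Integral of a real function against a signed measure (via the Jordan decomposition). -/
noncomputable def sint (ν : SignedMeasure ℝ) (g : ℝ → ℝ) : ℝ :=
  (∫ y, g y ∂ν.toJordanDecomposition.posPart) -
    ∫ y, g y ∂ν.toJordanDecomposition.negPart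

/-- `ν` is the derivative (Radon) measure `Df` of `f` on (0,1):
`∫₀¹ f φ' dx = -∫₀¹ φ dDf` for all φ ∈ C¹_c(0,1). -/
def IsDerivMeasure (f : ℝ → ℝ) (ν : SignedMeasure ℝ) : Prop :=
  ∀ φ : ℝ → ℝ, ContDiff ℝ 1 φ → tsupport φ ⊆ Set.Ioo 0 1 →
    ∫ x in (0:ℝ)..1, f x * deriv φ x = -(sint ν φ)


lemma ae_mem_Ioo (μ : Measure ℝ) (hμ : μ (Set.Ioo (0:ℝ) 1)ᶜ = 0) :
    ∀ᵐ y ∂μ, y ∈ Set.Ioo (0:ℝ) 1 := by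
  rw [ae_iff]
  exact hμ

lemma integrable_id' (μ : Measure ℝ) [IsFiniteMeasure μ] (hμ : μ (Set.Ioo (0:ℝ) 1)ᶜ = 0) :
    Integrable (fun y : ℝ => y) μ := by
  refine Integrable.mono' (integrable_const 1) aestronglyMeasurable_id ?_
  filter_upwards [ae_mem_Ioo μ hμ] with y hy
  rw [Real.norm_eq_abs, abs_le]
  exact ⟨by linarith [hy.1], hy.2.le⟩

lemma integral_Hbar (μ : Measure ℝ) [IsFiniteMeasure μ] (hμ : μ (Set.Ioo (0:ℝ) 1)ᶜ = 0) (x : ℝ) :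
    ∫ y, Hbar y x ∂μ = (∫ y, y ∂μ) - (μ (Set.Ioi x)).toReal := by
  have hpt : (fun y => Hbar y x) = fun y => y - (Set.Ioi x).indicator (fun _ => (1:ℝ)) y := by
    funext y
    by_cases h : x < y <;> simp [Hbar, Set.indicator, Set.mem_Ioi, h]
  have hind : Integrable ((Set.Ioi x).indicator (fun _ => (1:ℝ))) μ := by
    rw [integrable_indicator_iff measurableSet_Ioi]
    exact integrableOn_const (measure_ne_top μ _)
  rw [hpt, integral_sub (integrable_id' μ hμ) hind, integral_indicator_const _ measurableSet_Ioi,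
    smul_eq_mul, mul_one]
  rfl

lemma lemA (μ : Measure ℝ) [IsFiniteMeasure μ] (hμ : μ (Set.Ioo (0:ℝ) 1)ᶜ = 0)
    (φ : ℝ → ℝ) (hφ : ContDiff ℝ 1 φ) (hsp : tsupport φ ⊆ Set.Ioo 0 1) :
    ∫ x in Set.Ioo (0:ℝ) 1, (μ (Set.Ioi x)).toReal * deriv φ x = ∫ y, φ y ∂μ := by
  have hderc : Continuous (deriv φ) := hφ.continuous_deriv le_rfl
  have hφc : Continuous φ := hφ.continuous
  have hcsφ : HasCompactSupport φ :=
    HasCompactSupport.of_support_subset_isCompact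
      (isCompact_Icc (a := (0:ℝ)) (b := 1))
      ((subset_tsupport φ).trans (hsp.trans Set.Ioo_subset_Icc_self))
  have hcsd : HasCompactSupport (deriv φ) := hcsφ.deriv
  obtain ⟨C, hC⟩ := hcsd.exists_bound_of_continuous hderc
  -- the product function
  set F : ℝ → ℝ → ℝ := fun x y => if x < y then deriv φ x else 0 with hF
  have hFmeas : StronglyMeasurable (Function.uncurry F) := by
    apply StronglyMeasurable.ite (measurableSet_lt measurable_fst measurable_snd)
    · exact (hderc.comp continuous_fst).stronglyMeasurable
    · exact stronglyMeasurable_const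
  have hFint : Integrable (Function.uncurry F) ((volume.restrict (Set.Ioo (0:ℝ) 1)).prod μ) := by
    refine Integrable.mono' (integrable_const (|C|)) hFmeas.aestronglyMeasurable ?_
    refine Filter.Eventually.of_forall fun z => ?_
    by_cases h : z.1 < z.2
    · simpa [hF, Function.uncurry, if_pos h] using (hC z.1).trans (le_abs_self C)
    · simp [hF, Function.uncurry, if_neg h, abs_nonneg]
  have key : ∀ x : ℝ, (μ (Set.Ioi x)).toReal * deriv φ x = ∫ y, F x y ∂μ := by
    intro x
    have : (fun y => F x y) = (Set.Ioi x).indicator (fun _ => deriv φ x) := by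
      funext y
      by_cases h : x < y <;> simp [hF, Set.indicator, Set.mem_Ioi, h]
    rw [this, integral_indicator_const _ measurableSet_Ioi, smul_eq_mul]
    rfl
  calc ∫ x in Set.Ioo (0:ℝ) 1, (μ (Set.Ioi x)).toReal * deriv φ x
      = ∫ x in Set.Ioo (0:ℝ) 1, ∫ y, F x y ∂μ := by
        exact setIntegral_congr_fun measurableSet_Ioo fun x _ => key x
    _ = ∫ y, (∫ x in Set.Ioo (0:ℝ) 1, F x y) ∂μ := by
        exact integral_integral_swap hFint
    _ = ∫ y, φ y ∂μ := by
        apply integral_congr_ae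
        filter_upwards [ae_mem_Ioo μ hμ] with y hy
        have h1 : (fun x => F x y) = (Set.Iio y).indicator (deriv φ) := by
          funext x
          by_cases h : x < y <;> simp [hF, Set.indicator, Set.mem_Iio, h]
        have h2 : Set.Iio y ∩ Set.Ioo (0:ℝ) 1 = Set.Ioo 0 y := by
          ext t
          simp only [Set.mem_inter_iff, Set.mem_Iio, Set.mem_Ioo]
          constructor
          · rintro ⟨h1, h2, h3⟩; exact ⟨h2, h1⟩
          · rintro ⟨h1', h2'⟩; exact ⟨h2', h1', by linarith [hy.2]⟩
        rw [h1, integral_indicator measurableSet_Iio,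
          Measure.restrict_restrict measurableSet_Iio, h2]
        have h3 : ∫ x in Set.Ioo (0:ℝ) 1, (Set.Iio y).indicator (deriv φ) x
            = ∫ x in Set.Ioo (0:ℝ) y, deriv φ x := by
          rw [integral_indicator measurableSet_Iio,
            Measure.restrict_restrict measurableSet_Iio, h2]
        have h4 : ∫ x in Set.Ioo (0:ℝ) y, deriv φ x = ∫ x in (0:ℝ)..y, deriv φ x := by
          rw [intervalIntegral.integral_of_le hy.1.le,
            Measure.restrict_congr_set MeasureTheory.Ioo_ae_eq_Ioc]
        rw [h4, intervalIntegral.integral_deriv_eq_sub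
          (fun x _ => (hφ.differentiable one_ne_zero).differentiableAt)
          (hderc.intervalIntegrable 0 y)]
        have hφ0 : φ 0 = 0 := by
          apply image_eq_zero_of_notMem_tsupport
          intro h0
          exact absurd (hsp h0).1 (lt_irrefl 0)
        rw [hφ0, sub_zero]

lemma lemB (h : ℝ → ℝ) (hint : IntegrableOn h (Set.Ioo 0 1))
    (H : ∀ φ : ℝ → ℝ, ContDiff ℝ 1 φ → tsupport φ ⊆ Set.Ioo 0 1 →
      ∫ x in Set.Ioo (0:ℝ) 1, h x * deriv φ x = 0) :
    ∃ η : ℝ, ∀ᵐ x ∂(volume.restrict (Set.Ioo (0:ℝ) 1)), h x = η := by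
  -- bump function
  set b : ContDiffBump ((1:ℝ)/2) := ⟨1/8, 1/4, by norm_num, by norm_num⟩ with hb
  set χ : ℝ → ℝ := b.normed volume with hχ
  have hχc : Continuous χ := b.continuous_normed
  have hχint : Integrable χ volume := b.integrable_normed
  have hχ1 : ∫ x, χ x = 1 := b.integral_normed
  have hχsupp : tsupport χ ⊆ Set.Ioo 0 1 := by
    rw [hχ, b.tsupport_normed_eq, Real.closedBall_eq_Icc]
    intro t ht
    constructor <;> [linarith [ht.1]; linarith [ht.2]]
  have hχcs : HasCompactSupport χ := b.hasCompactSupport_normed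
  set η : ℝ := ∫ x in Set.Ioo (0:ℝ) 1, h x * χ x with hη
  refine ⟨η, ?_⟩
  have hconst : IntegrableOn (fun _ : ℝ => η) (Set.Ioo 0 1) :=
    integrableOn_const measure_Ioo_lt_top.ne
  have main : ∀ᵐ x ∂(volume : Measure ℝ), x ∈ Set.Ioo (0:ℝ) 1 → h x - η = 0 := by
    refine IsOpen.ae_eq_zero_of_integral_contDiff_smul_eq_zero isOpen_Ioo
      (IntegrableOn.locallyIntegrableOn (hint.sub hconst)) ?_
    intro g hg hgcs hgsupp
    have hgc : Continuous g := hg.continuous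
    set c : ℝ := ∫ s, g s with hc
    set ψ : ℝ → ℝ := fun t => g t - c * χ t with hψ
    have hψc : Continuous ψ := hgc.sub (continuous_const.mul hχc)
    -- support of ψ inside a compact K ⊆ Ioo 0 1
    set K : Set ℝ := tsupport g ∪ tsupport χ with hK
    have hKcl : IsClosed K := (isClosed_tsupport g).union (isClosed_tsupport χ)
    have hKcp : IsCompact K := hgcs.union hχcs
    have hKsub : K ⊆ Set.Ioo 0 1 := Set.union_subset hgsupp hχsupp
    have hKne : K.Nonempty := by
      refine ⟨1/2, Or.inr ?_⟩
      rw [hχ, b.tsupport_normed_eq]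
      exact Metric.mem_closedBall_self (by norm_num)
    have hψK : tsupport ψ ⊆ K := by
      refine closure_minimal ?_ hKcl
      intro t ht
      simp only [hψ, Function.mem_support] at ht
      by_contra htK
      have h1 : g t = 0 := image_eq_zero_of_notMem_tsupport (fun hmem => htK (Or.inl hmem))
      have h2 : χ t = 0 := image_eq_zero_of_notMem_tsupport (fun hmem => htK (Or.inr hmem))
      rw [h1, h2] at ht
      simp at ht
    set A : ℝ := sInf K with hA
    set B : ℝ := sSup K with hB
    have hAK : A ∈ K := hKcp.sInf_mem hKne
    have hBK : B ∈ K := hKcp.sSup_mem hKne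
    have hA0 : 0 < A := (hKsub hAK).1
    have hB1 : B < 1 := (hKsub hBK).2
    have hKAB : K ⊆ Set.Icc A B := fun t ht =>
      ⟨csInf_le hKcp.bddBelow ht, le_csSup hKcp.bddAbove ht⟩
    set a : ℝ := A/2 with ha
    set bb : ℝ := (B+1)/2 with hbb
    have ha0 : 0 < a := by positivity
    have haA : a < A := by rw [ha]; linarith
    have hBbb : B < bb := by rw [hbb]; linarith
    have hbb1 : bb < 1 := by rw [hbb]; linarith
    have habb : a < bb := by
      have : A ≤ B := hKAB hAK |>.2
      linarith
    have hψ0lo : ∀ t, t ≤ a → ψ t = 0 := fun t ht =>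
      image_eq_zero_of_notMem_tsupport (fun hmem => by
        have := (hKAB (hψK hmem)).1; linarith)
    have hψ0hi : ∀ t, bb ≤ t → ψ t = 0 := fun t ht =>
      image_eq_zero_of_notMem_tsupport (fun hmem => by
        have := (hKAB (hψK hmem)).2; linarith)
    -- primitive of ψ
    set φ : ℝ → ℝ := fun x => ∫ t in (0:ℝ)..x, ψ t with hφ
    have hd : ∀ x, HasDerivAt φ (ψ x) x := fun x =>
      (hψc.integral_hasStrictDerivAt 0 x).hasDerivAt
    have hdφ : deriv φ = ψ := funext fun x => (hd x).deriv
    have hφ1 : ContDiff ℝ 1 φ :=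
      contDiff_one_iff_deriv.2 ⟨fun x => (hd x).differentiableAt, by rw [hdφ]; exact hψc⟩
    have hφlo : ∀ x, x ≤ a → φ x = 0 := by
      intro x hx
      show (∫ t in (0:ℝ)..x, ψ t) = 0
      have heq : Set.EqOn ψ 0 (Set.uIcc 0 x) := by
        intro t ht
        have ht2 : t ≤ a := le_trans ht.2 (max_le ha0.le hx)
        exact hψ0lo t ht2
      rw [intervalIntegral.integral_congr heq]
      simp
    have hwhole : ∫ t, ψ t = 0 := by
      have : ∫ t, ψ t = (∫ t, g t) - c * ∫ t, χ t := by
        rw [hψ]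
        rw [integral_sub (hgc.integrable_of_hasCompactSupport hgcs)
          (hχint.const_mul c), integral_const_mul]
      rw [this, hχ1, hc]
      ring
    have hφhi : ∀ x, bb ≤ x → φ x = 0 := by
      intro x hx
      show (∫ t in (0:ℝ)..x, ψ t) = 0
      have hsplit : (∫ t in (0:ℝ)..bb, ψ t) + ∫ t in bb..x, ψ t = ∫ t in (0:ℝ)..x, ψ t :=
        intervalIntegral.integral_add_adjacent_intervals
          (hψc.intervalIntegrable 0 bb) (hψc.intervalIntegrable bb x)
      have h2 : ∫ t in bb..x, ψ t = 0 := by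
        have heq : Set.EqOn ψ 0 (Set.uIcc bb x) := by
          intro t ht
          exact hψ0hi t (le_trans (le_min le_rfl hx) ht.1)
        rw [intervalIntegral.integral_congr heq]
        simp
      have h1 : ∫ t in (0:ℝ)..bb, ψ t = 0 := by
        rw [intervalIntegral.integral_of_le (by linarith : (0:ℝ) ≤ bb)]
        rw [setIntegral_eq_integral_of_forall_compl_eq_zero (fun t ht => ?_)]
        · exact hwhole
        · simp only [Set.mem_Ioc, not_and_or, not_lt, not_le] at ht
          rcases ht with ht | ht
          · exact hψ0lo t (by linarith)
          · exact hψ0hi t ht.le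
      rw [← hsplit, h1, h2, add_zero]
    have hφsupp : tsupport φ ⊆ Set.Ioo 0 1 := by
      have hsub : Function.support φ ⊆ Set.Icc a bb := by
        intro x hx
        simp only [Function.mem_support] at hx
        by_contra hmem
        simp only [Set.mem_Icc, not_and_or, not_le] at hmem
        rcases hmem with hm | hm
        · exact hx (hφlo x hm.le)
        · exact hx (hφhi x hm.le)
      refine (closure_minimal hsub isClosed_Icc).trans ?_
      intro t ht
      exact ⟨lt_of_lt_of_le ha0 ht.1, lt_of_le_of_lt ht.2 hbb1⟩
    -- apply the hypothesis H to φ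
    have hHφ := H φ hφ1 hφsupp
    rw [hdφ] at hHφ
    -- integrability facts on Ioo 0 1
    obtain ⟨Cg, hCg⟩ := hgcs.exists_bound_of_continuous hgc
    obtain ⟨Cχ, hCχ⟩ := hχcs.exists_bound_of_continuous hχc
    have hhg : IntegrableOn (fun x => g x * h x) (Set.Ioo 0 1) :=
      Integrable.bdd_mul hint hgc.aestronglyMeasurable (Filter.Eventually.of_forall hCg)
    have hhχ : IntegrableOn (fun x => χ x * h x) (Set.Ioo 0 1) :=
      Integrable.bdd_mul hint hχc.aestronglyMeasurable (Filter.Eventually.of_forall hCχ)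
    have hexp : ∫ x in Set.Ioo (0:ℝ) 1, h x * ψ x
        = (∫ x in Set.Ioo (0:ℝ) 1, g x * h x) - c * ∫ x in Set.Ioo (0:ℝ) 1, χ x * h x := by
      have : ∀ x, h x * ψ x = g x * h x - c * (χ x * h x) := by
        intro x; rw [hψ]; ring
      rw [integral_congr_ae (Filter.Eventually.of_forall this)]
      rw [integral_sub hhg (hhχ.const_mul c), integral_const_mul]
    have hηeq : ∫ x in Set.Ioo (0:ℝ) 1, χ x * h x = η := by
      rw [hη]
      exact integral_congr_ae (Filter.Eventually.of_forall fun x => mul_comm (χ x) (h x))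
    have hgint : ∫ x in Set.Ioo (0:ℝ) 1, g x = c := by
      rw [hc]
      exact setIntegral_eq_integral_of_forall_compl_eq_zero
        (fun t ht => image_eq_zero_of_notMem_tsupport (fun hmem => ht (hgsupp hmem)))
    have hghη : ∫ x in Set.Ioo (0:ℝ) 1, g x * h x = c * η := by
      have := hHφ
      rw [hexp, hηeq] at this
      linarith
    -- now compute the goal
    have hgoal : ∫ x, g x • (h x - η) ∂volume
        = ∫ x in Set.Ioo (0:ℝ) 1, g x • (h x - η) := by
      symm
      exact setIntegral_eq_integral_of_forall_compl_eq_zero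
        (fun t ht => by
          rw [image_eq_zero_of_notMem_tsupport (fun hmem => ht (hgsupp hmem)), zero_smul])
    rw [hgoal]
    have : ∀ x, g x • (h x - η) = g x * h x - η * g x := by
      intro x; simp [smul_eq_mul]; ring
    rw [integral_congr_ae (Filter.Eventually.of_forall this)]
    rw [integral_sub hhg (((hgc.integrable_of_hasCompactSupport hgcs).integrableOn).const_mul η),
      integral_const_mul, hghη, hgint]
    ring
  refine (ae_restrict_iff' measurableSet_Ioo).2 ?_
  filter_upwards [main] with x hx hmem
  have := hx hmem
  linarith

theorem stmt3 (f : ℝ → ℝ) (ν : SignedMeasure ℝ)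
    (hf : IntegrableOn f (Set.Ioo 0 1)) (hν : IsDerivMeasure f ν)
    (hsupp : ν.totalVariation (Set.Ioo (0:ℝ) 1)ᶜ = 0) :
    ∃ η : ℝ, ∀ᵐ x ∂(volume.restrict (Set.Ioo (0:ℝ) 1)),
      f x = sint ν (fun y => Hbar y x) + η := by
  set μp := ν.toJordanDecomposition.posPart with hμp
  set μn := ν.toJordanDecomposition.negPart with hμn
  have hpn : μp (Set.Ioo (0:ℝ) 1)ᶜ = 0 ∧ μn (Set.Ioo (0:ℝ) 1)ᶜ = 0 := by
    have := hsupp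
    rw [SignedMeasure.totalVariation, Measure.add_apply] at this
    exact ⟨by simpa using (add_eq_zero.1 this).1, by simpa using (add_eq_zero.1 this).2⟩
  obtain ⟨hp, hn⟩ := hpn
  -- G and its properties
  set Gp : ℝ → ℝ := fun x => (μp (Set.Ioi x)).toReal with hGp
  set Gn : ℝ → ℝ := fun x => (μn (Set.Ioi x)).toReal with hGn
  have hGpm : Antitone Gp := fun x y hxy =>
    ENNReal.toReal_mono (measure_ne_top μp _) (measure_mono (Set.Ioi_subset_Ioi hxy))
  have hGnm : Antitone Gn := fun x y hxy =>
    ENNReal.toReal_mono (measure_ne_top μn _) (measure_mono (Set.Ioi_subset_Ioi hxy))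
  have hGpb : ∀ x, ‖Gp x‖ ≤ (μp Set.univ).toReal := fun x => by
    rw [Real.norm_eq_abs, abs_of_nonneg ENNReal.toReal_nonneg]
    exact ENNReal.toReal_mono (measure_ne_top μp _) (measure_mono (Set.subset_univ _))
  have hGnb : ∀ x, ‖Gn x‖ ≤ (μn Set.univ).toReal := fun x => by
    rw [Real.norm_eq_abs, abs_of_nonneg ENNReal.toReal_nonneg]
    exact ENNReal.toReal_mono (measure_ne_top μn _) (measure_mono (Set.subset_univ _))
  have hGpi : IntegrableOn Gp (Set.Ioo 0 1) :=
    Integrable.mono' (integrable_const ((μp Set.univ).toReal))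
      (hGpm.measurable.aestronglyMeasurable) (Filter.Eventually.of_forall hGpb)
  have hGni : IntegrableOn Gn (Set.Ioo 0 1) :=
    Integrable.mono' (integrable_const ((μn Set.univ).toReal))
      (hGnm.measurable.aestronglyMeasurable) (Filter.Eventually.of_forall hGnb)
  set G : ℝ → ℝ := fun x => Gp x - Gn x with hG
  -- apply du Bois-Reymond to f + G
  have key : ∀ φ : ℝ → ℝ, ContDiff ℝ 1 φ → tsupport φ ⊆ Set.Ioo 0 1 →
      ∫ x in Set.Ioo (0:ℝ) 1, (f x + G x) * deriv φ x = 0 := by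
    intro φ hφ1 hsp
    have hderc : Continuous (deriv φ) := hφ1.continuous_deriv le_rfl
    have hcsφ : HasCompactSupport φ :=
      HasCompactSupport.of_support_subset_isCompact
        (isCompact_Icc (a := (0:ℝ)) (b := 1))
        ((subset_tsupport φ).trans (hsp.trans Set.Ioo_subset_Icc_self))
    obtain ⟨C, hC⟩ := hcsφ.deriv.exists_bound_of_continuous hderc
    have I1 : IntegrableOn (fun x => f x * deriv φ x) (Set.Ioo 0 1) :=
      (Integrable.bdd_mul hf hderc.aestronglyMeasurable (Filter.Eventually.of_forall hC)).congr
        (Filter.Eventually.of_forall fun x => mul_comm _ _)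
    have I2 : IntegrableOn (fun x => Gp x * deriv φ x) (Set.Ioo 0 1) := by
      refine Integrable.mono' (integrable_const ((μp Set.univ).toReal * C)) ?_ ?_
      · exact (hGpm.measurable.aestronglyMeasurable).mul hderc.aestronglyMeasurable
      · refine Filter.Eventually.of_forall fun x => ?_
        rw [norm_mul]
        exact mul_le_mul (hGpb x) (hC x) (norm_nonneg _) ENNReal.toReal_nonneg
    have I3 : IntegrableOn (fun x => Gn x * deriv φ x) (Set.Ioo 0 1) := by
      refine Integrable.mono' (integrable_const ((μn Set.univ).toReal * C)) ?_ ?_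
      · exact (hGnm.measurable.aestronglyMeasurable).mul hderc.aestronglyMeasurable
      · refine Filter.Eventually.of_forall fun x => ?_
        rw [norm_mul]
        exact mul_le_mul (hGnb x) (hC x) (norm_nonneg _) ENNReal.toReal_nonneg
    have hfφ : ∫ x in Set.Ioo (0:ℝ) 1, f x * deriv φ x = -(sint ν φ) := by
      have := hν φ hφ1 hsp
      rwa [intervalIntegral.integral_of_le (by norm_num : (0:ℝ) ≤ 1),
        ← Measure.restrict_congr_set MeasureTheory.Ioo_ae_eq_Ioc] at this
    have hGpφ := lemA μp hp φ hφ1 hsp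
    have hGnφ := lemA μn hn φ hφ1 hsp
    have I23 : IntegrableOn (fun x => Gp x * deriv φ x - Gn x * deriv φ x) (Set.Ioo 0 1) :=
      I2.sub I3
    have hpt : ∀ x : ℝ, (f x + G x) * deriv φ x
        = f x * deriv φ x + (Gp x * deriv φ x - Gn x * deriv φ x) := by
      intro x; simp only [hG]; ring
    rw [integral_congr_ae (Filter.Eventually.of_forall hpt), integral_add I1 I23,
      integral_sub I2 I3, hfφ, hGpφ, hGnφ]
    simp only [sint, ← hμp, ← hμn]
    ring
  obtain ⟨η', hη'⟩ := lemB (fun x => f x + G x) (hf.add (hGpi.sub hGni)) key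
  -- identify sint ν (Hbar · x)
  have hsintH : ∀ x : ℝ, sint ν (fun y => Hbar y x)
      = ((∫ y, y ∂μp) - ∫ y, y ∂μn) - G x := by
    intro x
    simp only [sint, ← hμp, ← hμn]
    rw [integral_Hbar μp hp x, integral_Hbar μn hn x]
    simp only [hG, hGp, hGn]
    ring
  refine ⟨η' - ((∫ y, y ∂μp) - ∫ y, y ∂μn), ?_⟩
  filter_upwards [hη'] with x hx
  rw [hsintH x]
  linarith
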